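/- Let $k$ be a field of characteristic $p > 0$ and consider the action of $\alpha_p = \mathrm{Spec}(k[t]/t^p)$ on $\mathbb{A}^1_k = \mathrm{Spec}(k[y])$ given by $y \mapsto y/(1+ty) = y\sum_{i=0}^{p-1}(-1)^i t^i y^i$. Then the stabilizer has coordinate ring $k[y,t]/(t^p, t y^2)$, its augmentation ideal is isomorphic as a $k[y]$-module to $(k[y]/(y^2))^{\oplus(p-1)}$, and the associated divisor is $2(p-1)[0]$. -/

import Mathlib

/-- Port helper: the ring structure on a quotient of a polynomial ring, which instance search
no longer finds on its own for `k[X][X] ⧸ Jp`; it is `Ideal.Quotient.commRing I` itself. -/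
noncomputable instance stmt15PolyQuotCommRing (R : Type*) [CommRing R] (I : Ideal (Polynomial R)) :
    CommRing (Polynomial R ⧸ I) :=
  Ideal.Quotient.commRing I

open Polynomial

section Stmt15Aux

variable {k : Type*} [Field k]

private lemma stmt15_telescope (p : ℕ) :
    (∑ i ∈ Finset.range p, (-1 : Polynomial (Polynomial k)) ^ i * (X ^ i * C (X ^ (i + 1)))) *
      (1 + X * C X)
    = C X - (-1 : Polynomial (Polynomial k)) ^ p * (X ^ p * C (X ^ (p + 1))) := by
  have step : ∀ i : ℕ,
      ((-1 : Polynomial (Polynomial k)) ^ i * (X ^ i * C (X ^ (i + 1)))) * (1 + X * C X)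
      = ((-1 : Polynomial (Polynomial k)) ^ i * (X ^ i * C (X ^ (i + 1))))
        - ((-1 : Polynomial (Polynomial k)) ^ (i + 1) * (X ^ (i + 1) * C (X ^ (i + 1 + 1)))) := by
    intro i
    have h1 : (C (X ^ (i + 1 + 1)) : Polynomial (Polynomial k)) = C (X ^ (i + 1)) * C X := by
      rw [← C_mul, ← pow_succ]
    rw [h1, pow_succ (X : Polynomial (Polynomial k)) i,
      pow_succ (-1 : Polynomial (Polynomial k)) i]
    ring
  rw [Finset.sum_mul]
  simp only [step]
  rw [Finset.sum_range_sub'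
    (fun i => ((-1 : Polynomial (Polynomial k)) ^ i * (X ^ i * C (X ^ (i + 1))))) p]
  simp

private lemma stmt15_coeff_of_mem_T {p : ℕ} (hp : 0 < p) {g : Polynomial (Polynomial k)}
    (hg : g ∈ Ideal.span ({X ^ p, X * C (X ^ 2)} : Set (Polynomial (Polynomial k)))) :
    g.coeff 0 = 0 ∧ ∀ j, 0 < j → j < p → (X : Polynomial k) ^ 2 ∣ g.coeff j := by
  induction hg using Submodule.span_induction with
  | mem x hx =>
    simp only [Set.mem_insert_iff, Set.mem_singleton_iff] at hx
    rcases hx with rfl | rfl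
    · constructor
      · simp [coeff_X_pow, hp.ne]
      · intro j hj1 hj2
        simp [coeff_X_pow, hj2.ne]
    · have he : (X : Polynomial (Polynomial k)) * C ((X : Polynomial k) ^ 2)
          = C ((X : Polynomial k) ^ 2) * X ^ 1 := by rw [pow_one]; ring
      rw [he]
      constructor
      · simp [coeff_C_mul, coeff_X_pow]
      · intro j hj1 hj2
        rw [coeff_C_mul]
        exact dvd_mul_right _ _
  | zero => simp
  | add x y hx hy ihx ihy =>
    refine ⟨by simp [ihx.1, ihy.1], fun j hj1 hj2 => ?_⟩
    rw [coeff_add]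
    exact dvd_add (ihx.2 j hj1 hj2) (ihy.2 j hj1 hj2)
  | smul a x hx ih =>
    rw [smul_eq_mul]
    constructor
    · rw [mul_coeff_zero, ih.1, mul_zero]
    · intro j hj1 hj2
      rw [coeff_mul]
      refine Finset.dvd_sum fun q hq => ?_
      rw [Finset.HasAntidiagonal.mem_antidiagonal] at hq
      by_cases hb : q.2 = 0
      · rw [hb, ih.1, mul_zero]
        exact dvd_zero _
      · exact Dvd.dvd.mul_left (ih.2 q.2 (Nat.pos_of_ne_zero hb) (by omega)) _

end Stmt15Aux

open Polynomial in
set_option maxHeartbeats 1000000 in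
/-- for the homographic `α_p`-action on `𝔸¹_k` (char `k = p`) given by
`y ↦ y/(1+ty) = ∑_{i<p} (-1)ⁱ tⁱ y^{i+1}`: the stabilizer has coordinate ring
`k[y][t]/(tᵖ, t y²)`, its augmentation ideal `𝔪 = (t)` satisfies
`𝔪 ≅ (k[y]/(y²))^{⊕(p-1)}` as `k[y]`-modules, and the associated divisor is
`2(p-1)[0]` (the determinant of the presenting map `·y²` is `y^{2(p-1)}`). -/
theorem stmt15 {k : Type*} [Field k] {p : ℕ} (hp : p.Prime) [CharP k p]
    (Jp : Ideal (Polynomial (Polynomial k))) (hJp : Jp = Ideal.span {X ^ p})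
    (ξ : Polynomial (Polynomial k) ⧸ Jp)
    (hξ : ξ = Ideal.Quotient.mk Jp
      (∑ i ∈ Finset.range p, (-1 : Polynomial (Polynomial k)) ^ i * (X ^ i * C (X ^ (i + 1)))))
    (J' : Ideal (Polynomial (Polynomial k) ⧸ Jp))
    (hJ' : J' = Ideal.span {x | ∃ a : Polynomial k,
      x = Polynomial.aeval (R := k) ξ a - algebraMap (Polynomial k) _ a})
    (T : Ideal (Polynomial (Polynomial k))) (hT : T = Ideal.span {X ^ p, X * C (X ^ 2)})
    (𝔪 : Ideal (Polynomial (Polynomial k) ⧸ T))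
    (h𝔪 : 𝔪 = Ideal.span {Ideal.Quotient.mk T X})
    (h : (Fin (p - 1) → Polynomial k) →ₗ[Polynomial k] (Fin (p - 1) → Polynomial k))
    (hh : h = ((X : Polynomial k) ^ 2) • LinearMap.id) :
    (∃ e : ((Polynomial (Polynomial k) ⧸ Jp) ⧸ J') ≃+* (Polynomial (Polynomial k) ⧸ T),
      ∀ f : Polynomial (Polynomial k),
        e (Ideal.Quotient.mk J' (Ideal.Quotient.mk Jp f)) = Ideal.Quotient.mk T f) ∧
    Nonempty ((Submodule.restrictScalars (Polynomial k) 𝔪) ≃ₗ[Polynomial k]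
        (Fin (p - 1) → Polynomial k ⧸ Ideal.span {(X : Polynomial k) ^ 2})) ∧
    LinearMap.det h = (X : Polynomial k) ^ (2 * (p - 1)) := by
  have hppos : 0 < p := hp.pos
  set S' : Polynomial (Polynomial k) :=
    ∑ i ∈ Finset.range p, (-1 : Polynomial (Polynomial k)) ^ i * (X ^ i * C (X ^ (i + 1)))
    with hS'
  set η : Polynomial (Polynomial k) ⧸ Jp :=
    algebraMap (Polynomial k) (Polynomial (Polynomial k) ⧸ Jp) (X : Polynomial k) with hη
  set I2 : Ideal (Polynomial (Polynomial k)) := Ideal.span {X * C (X ^ 2)} with hI2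
  have halg : ∀ a : Polynomial k,
      algebraMap (Polynomial k) (Polynomial (Polynomial k) ⧸ Jp) a = Polynomial.aeval (R := k) η a := by
    intro a
    have h1 := Polynomial.aeval_algHom_apply
      (IsScalarTower.toAlgHom k (Polynomial k) (Polynomial (Polynomial k) ⧸ Jp)) X a
    rw [Polynomial.aeval_X_left_apply, IsScalarTower.coe_toAlgHom'] at h1
    exact h1.symm
  have hηmk : η = Ideal.Quotient.mk Jp (C X) := by
    rw [hη, IsScalarTower.algebraMap_apply (Polynomial k) (Polynomial (Polynomial k))
      (Polynomial (Polynomial k) ⧸ Jp), Ideal.Quotient.algebraMap_eq, Polynomial.algebraMap_eq]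
  -- Part 1
  have hJ'2 : J' = Ideal.span {ξ - η} := by
    rw [hJ']
    apply le_antisymm
    · rw [Ideal.span_le]
      rintro x ⟨a, rfl⟩
      rw [SetLike.mem_coe, halg a, Ideal.mem_span_singleton, aeval_def, aeval_def,
        ← eval_map, ← eval_map]
      exact sub_dvd_eval_sub _ _ _
    · rw [Ideal.span_le, Set.singleton_subset_iff]
      exact Ideal.subset_span ⟨(X : Polynomial k), by rw [aeval_X]⟩
  have hsub : ξ - η = Ideal.Quotient.mk Jp (S' - C X) := by
    rw [hξ, hηmk, map_sub]
  have hspan : Ideal.span {ξ - η} = Ideal.map (Ideal.Quotient.mk Jp) I2 := by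
    rw [hI2, Ideal.map_span, Set.image_singleton]
    apply le_antisymm
    · rw [Ideal.span_le, Set.singleton_subset_iff, SetLike.mem_coe, hsub,
        Ideal.mem_span_singleton]
      apply _root_.map_dvd
      have hrw : S' - C X = ∑ i ∈ Finset.range (p - 1),
          (-1 : Polynomial (Polynomial k)) ^ (i + 1) * (X ^ (i + 1) * C (X ^ (i + 1 + 1))) := by
        have hp1 : p = (p - 1) + 1 := (Nat.succ_pred_eq_of_pos hppos).symm
        rw [hS', hp1, Finset.sum_range_succ'
          (fun i => (-1 : Polynomial (Polynomial k)) ^ i * (X ^ i * C (X ^ (i + 1))))]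
        simp
      rw [hrw]
      refine Finset.dvd_sum fun i _ => ⟨(-1 : Polynomial (Polynomial k)) ^ (i + 1)
        * (X ^ i * C (X ^ i)), ?_⟩
      have e1 : ((X : Polynomial k) ^ (i + 1 + 1)) = X ^ 2 * X ^ i := by ring
      rw [e1, C_mul]
      ring
    · rw [Ideal.span_le, Set.singleton_subset_iff, SetLike.mem_coe, hsub,
        Ideal.mem_span_singleton]
      refine ⟨Ideal.Quotient.mk Jp ((-(1 + X * C X) : Polynomial (Polynomial k))), ?_⟩
      have key : (S' - C X) * ((-(1 + X * C X) : Polynomial (Polynomial k)))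
          = X * C (X ^ 2) + (-1 : Polynomial (Polynomial k)) ^ p * (X ^ p * C (X ^ (p + 1))) := by
        have t1 := stmt15_telescope (k := k) p
        rw [← hS'] at t1
        have h2 : (C ((X : Polynomial k) ^ 2) : Polynomial (Polynomial k)) = C X * C X := by
          rw [← C_mul, ← sq]
        rw [h2]
        linear_combination -t1
      rw [← map_mul, key, map_add]
      have hz : Ideal.Quotient.mk Jp
          ((-1 : Polynomial (Polynomial k)) ^ p * (X ^ p * C (X ^ (p + 1)))) = 0 := by
        rw [Ideal.Quotient.eq_zero_iff_mem, hJp]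
        exact Ideal.mul_mem_left _ _ (Ideal.mul_mem_right _ _ (Ideal.subset_span rfl))
      rw [hz, add_zero]
  have hJ'map : J' = Ideal.map (Ideal.Quotient.mk Jp) I2 := hJ'2.trans hspan
  have hsup : Jp ⊔ I2 = T := by
    rw [hJp, hI2, hT, ← Ideal.span_union, Set.singleton_union]
  have part1 : (∃ e : ((Polynomial (Polynomial k) ⧸ Jp) ⧸ J') ≃+* (Polynomial (Polynomial k) ⧸ T),
      ∀ f : Polynomial (Polynomial k),
        e (Ideal.Quotient.mk J' (Ideal.Quotient.mk Jp f)) = Ideal.Quotient.mk T f) := by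
    refine ⟨(Ideal.quotEquivOfEq hJ'map).trans
      ((DoubleQuot.quotQuotEquivQuotSup Jp I2).trans (Ideal.quotEquivOfEq hsup)), fun f => ?_⟩
    rw [RingEquiv.trans_apply, RingEquiv.trans_apply, Ideal.quotEquivOfEq_mk]
    rw [show (Ideal.Quotient.mk (Ideal.map (Ideal.Quotient.mk Jp) I2)) (Ideal.Quotient.mk Jp f)
      = DoubleQuot.quotQuotMk Jp I2 f from rfl]
    rw [DoubleQuot.quotQuotEquivQuotSup_quotQuotMk, Ideal.quotEquivOfEq_mk]
  refine ⟨part1, ?_, ?_⟩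
  · -- Part 2
    classical
    set v : Fin (p - 1) → (Polynomial (Polynomial k) ⧸ T) :=
      fun i => Ideal.Quotient.mk T (X ^ ((i : ℕ) + 1)) with hv
    set f2 : (Fin (p - 1) → Polynomial k) →ₗ[Polynomial k] (Polynomial (Polynomial k) ⧸ T) :=
      Fintype.linearCombination (Polynomial k) v with hf2
    have hsmul : ∀ (a : Polynomial k) (z : Polynomial (Polynomial k)),
        a • Ideal.Quotient.mk T z = Ideal.Quotient.mk T (C a * z) := by
      intro a z
      rw [← Polynomial.smul_eq_C_mul]
      exact (Submodule.Quotient.mk_smul T a z).symm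
    have hXmem : ∀ n : ℕ, p ≤ n → (X : Polynomial (Polynomial k)) ^ n ∈ T := by
      intro n hn
      rw [hT]
      have hXn : (X : Polynomial (Polynomial k)) ^ n = X ^ p * X ^ (n - p) := by
        rw [← pow_add]
        congr 1
        omega
      rw [hXn]
      exact Ideal.mul_mem_right _ _ (Ideal.subset_span (Set.mem_insert _ _))
    have hrange : LinearMap.range f2 = Submodule.restrictScalars (Polynomial k) 𝔪 := by
      rw [hf2, Fintype.range_linearCombination]
      apply le_antisymm
      · rw [Submodule.span_le]
        rintro _ ⟨i, rfl⟩
        rw [SetLike.mem_coe, Submodule.restrictScalars_mem, h𝔪, Ideal.mem_span_singleton]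
        exact ⟨Ideal.Quotient.mk T (X ^ (i : ℕ)), by rw [← map_mul, ← pow_succ']⟩
      · intro x hx
        rw [Submodule.restrictScalars_mem, h𝔪, Ideal.mem_span_singleton] at hx
        obtain ⟨c, rfl⟩ := hx
        obtain ⟨g, rfl⟩ := Ideal.Quotient.mk_surjective c
        rw [← map_mul]
        have hg : (X : Polynomial (Polynomial k)) * g
            = ∑ i ∈ Finset.range (g.natDegree + 1), C (g.coeff i) * X ^ (i + 1) := by
          conv_lhs => rw [g.as_sum_range_C_mul_X_pow]
          rw [Finset.mul_sum]
          refine Finset.sum_congr rfl fun i _ => ?_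
          rw [pow_succ]
          ring
        rw [hg, map_sum]
        refine Submodule.sum_mem _ fun i _ => ?_
        by_cases hip : i < p - 1
        · have hterm : Ideal.Quotient.mk T (C (g.coeff i) * X ^ (i + 1))
              = (g.coeff i) • v ⟨i, hip⟩ := by
            rw [hv]
            exact (hsmul _ _).symm
          rw [hterm]
          exact Submodule.smul_mem _ _ (Submodule.subset_span ⟨⟨i, hip⟩, rfl⟩)
        · have hterm : Ideal.Quotient.mk T (C (g.coeff i) * X ^ (i + 1)) = 0 := by
            rw [Ideal.Quotient.eq_zero_iff_mem]
            exact Ideal.mul_mem_left _ _ (hXmem _ (by omega))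
          rw [hterm]
          exact Submodule.zero_mem _
    have hker : LinearMap.ker f2 = Submodule.pi Set.univ
        (fun _ : Fin (p - 1) => (Ideal.span {(X : Polynomial k) ^ 2}
          : Submodule (Polynomial k) (Polynomial k))) := by
      ext c
      rw [LinearMap.mem_ker, Submodule.mem_pi]
      have hfc : f2 c = Ideal.Quotient.mk T (∑ i : Fin (p - 1), C (c i) * X ^ ((i : ℕ) + 1)) := by
        rw [hf2, Fintype.linearCombination_apply, map_sum]
        exact Finset.sum_congr rfl fun i _ => hsmul _ _
      rw [hfc, Ideal.Quotient.eq_zero_iff_mem]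
      constructor
      · intro hmem i _
        have hchar := stmt15_coeff_of_mem_T hppos (hT ▸ hmem)
        have hcoeff : (∑ j : Fin (p - 1), (C (c j) * X ^ ((j : ℕ) + 1)
            : Polynomial (Polynomial k))).coeff ((i : ℕ) + 1) = c i := by
          rw [Polynomial.finset_sum_coeff]
          rw [Finset.sum_eq_single i]
          · rw [coeff_C_mul, coeff_X_pow, if_pos rfl, mul_one]
          · intro j _ hji
            rw [coeff_C_mul, coeff_X_pow, if_neg, mul_zero]
            intro hcontra
            exact hji (Fin.ext (by omega))
          · intro hi
            exact absurd (Finset.mem_univ i) hi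
        show c i ∈ Ideal.span {(X : Polynomial k) ^ 2}
        rw [Ideal.mem_span_singleton, ← hcoeff]
        exact hchar.2 _ (Nat.succ_pos _) (by omega)
      · intro hc
        rw [hT]
        refine Submodule.sum_mem _ fun i _ => ?_
        have hci : c i ∈ Ideal.span {(X : Polynomial k) ^ 2} := hc i (Set.mem_univ i)
        obtain ⟨d, hd⟩ := Ideal.mem_span_singleton.mp hci
        rw [hd]
        have hrw : (C ((X : Polynomial k) ^ 2 * d) : Polynomial (Polynomial k)) * X ^ ((i : ℕ) + 1)
            = (X * C ((X : Polynomial k) ^ 2)) * (C d * X ^ (i : ℕ)) := by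
          rw [C_mul, pow_succ]
          ring
        rw [hrw]
        exact Ideal.mul_mem_right _ _ (Ideal.subset_span (Set.mem_insert_of_mem _ rfl))
    exact ⟨(LinearEquiv.ofEq _ _ hrange.symm).trans
      ((LinearMap.quotKerEquivRange f2).symm.trans
        ((Submodule.quotEquivOfEq _ _ hker).trans
          (Submodule.quotientPi (fun _ : Fin (p - 1) => (Ideal.span {(X : Polynomial k) ^ 2}
            : Submodule (Polynomial k) (Polynomial k))))))⟩
  · -- Part 3
    rw [hh]
    have hmat : LinearMap.toMatrix' (((X : Polynomial k) ^ 2) •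
        (LinearMap.id : (Fin (p - 1) → Polynomial k) →ₗ[Polynomial k] Fin (p - 1) → Polynomial k))
        = ((X : Polynomial k) ^ 2) • (1 : Matrix (Fin (p - 1)) (Fin (p - 1)) (Polynomial k)) := by
      rw [map_smul, LinearMap.toMatrix'_id]
    rw [← LinearMap.det_toMatrix', hmat, Matrix.det_smul, Matrix.det_one, mul_one,
      Fintype.card_fin, ← pow_mul]
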